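/- Small-r two-sided asymptotics for Φ: there exist constants c > 0 and C > 0 such that for all r ∈ (0, 1/2] and all v ≥ 0 with r v ≤ 1, c (v + v²) ≤ ∫₀^v Ã(r,y)^{1/2} dy ≤ C (v + v²). -/

import Mathlib

open Real Set

/-- `Ã(r,y) = 1 + 2 sin²(ry) / r²`. -/
noncomputable def Atil (r y : ℝ) : ℝ := 1 + 2 * Real.sin (r * y) ^ 2 / r ^ 2

lemma Atil_one_le {r y : ℝ} (hr : 0 < r) : 1 ≤ Atil r y := by
  have : 0 ≤ 2 * Real.sin (r * y) ^ 2 / r ^ 2 := by positivity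
  simp only [Atil]; linarith

set_option maxHeartbeats 1000000 in
/-- Small-`r` two-sided asymptotics for `Φ`. -/
theorem small_r_asymptotics_Phi :
    ∃ c : ℝ, 0 < c ∧ ∃ C : ℝ, 0 < C ∧
      ∀ r ∈ Set.Ioc (0:ℝ) (1/2), ∀ v : ℝ, 0 ≤ v → r * v ≤ 1 →
        c * (v + v ^ 2) ≤ (∫ y in (0:ℝ)..v, (Atil r y) ^ ((1:ℝ)/2)) ∧
        (∫ y in (0:ℝ)..v, (Atil r y) ^ ((1:ℝ)/2)) ≤ C * (v + v ^ 2) := by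
  refine ⟨1/4, by norm_num, 1, by norm_num, ?_⟩
  rintro r ⟨hr, hr2⟩ v hv hrv
  have hπ : (3:ℝ) < π := Real.pi_gt_three
  have hπ' : π < 3.15 := Real.pi_lt_d2
  -- continuity / integrability
  have hcont : Continuous fun y => (Atil r y) ^ ((1:ℝ)/2) := by
    apply Continuous.rpow_const
    · unfold Atil; fun_prop (disch := intro x; positivity)
    · intro x; left
      have := Atil_one_le (y := x) hr; linarith
  have hint : IntervalIntegrable (fun y => (Atil r y) ^ ((1:ℝ)/2))
      MeasureTheory.volume 0 v := hcont.intervalIntegrable 0 v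
  -- pointwise bounds
  have hlow : ∀ y ∈ Set.Icc (0:ℝ) v, (1 + y) / 2 ≤ (Atil r y) ^ ((1:ℝ)/2) := by
    rintro y ⟨hy0, hyv⟩
    rw [← Real.sqrt_eq_rpow]
    apply Real.le_sqrt_of_sq_le
    have hry : 0 ≤ r * y := by positivity
    have hry1 : r * y ≤ 1 := le_trans (by nlinarith) hrv
    have hryπ : r * y ≤ π / 2 := by linarith
    have hsin : 2 / π * (r * y) ≤ Real.sin (r * y) := Real.mul_le_sin hry hryπ
    have hsin0 : 0 ≤ 2 / π * (r * y) := by positivity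
    have hsq : (2 / π * (r * y)) ^ 2 ≤ Real.sin (r * y) ^ 2 := by
      apply sq_le_sq' <;> nlinarith
    have hdiv : 4 / π ^ 2 * y ^ 2 ≤ Real.sin (r * y) ^ 2 / r ^ 2 := by
      rw [le_div_iff₀ (by positivity)]
      calc 4 / π ^ 2 * y ^ 2 * r ^ 2 = (2 / π * (r * y)) ^ 2 := by
            field_simp; ring
        _ ≤ Real.sin (r * y) ^ 2 := hsq
    have hπ2 : π ^ 2 < 10 := by nlinarith
    have ht : (3:ℝ)/8 ≤ 4 / π ^ 2 := by
      rw [le_div_iff₀ (by positivity)]; nlinarith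
    have h8 : 3 / 4 * y ^ 2 ≤ 2 * (4 / π ^ 2 * y ^ 2) := by
      nlinarith [mul_le_mul_of_nonneg_right ht (sq_nonneg y)]
    unfold Atil
    have hA : 2 * Real.sin (r * y) ^ 2 / r ^ 2 = 2 * (Real.sin (r * y) ^ 2 / r ^ 2) := by
      ring
    rw [hA]
    nlinarith [sq_nonneg (1 - y), h8, hdiv]
  have hup : ∀ y ∈ Set.Icc (0:ℝ) v, (Atil r y) ^ ((1:ℝ)/2) ≤ 1 + Real.sqrt 2 * y := by
    rintro y ⟨hy0, hyv⟩
    rw [← Real.sqrt_eq_rpow]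
    have h2 : (0:ℝ) ≤ Real.sqrt 2 * y := by positivity
    rw [show (1:ℝ) + Real.sqrt 2 * y = Real.sqrt ((1 + Real.sqrt 2 * y)^2) from
      (Real.sqrt_sq (by linarith)).symm]
    apply Real.sqrt_le_sqrt
    have hsin : Real.sin (r * y) ^ 2 ≤ (r * y) ^ 2 := by
      have h1 : |Real.sin (r * y)| ≤ |r * y| := Real.abs_sin_le_abs
      calc Real.sin (r * y) ^ 2 = |Real.sin (r * y)| ^ 2 := (sq_abs _).symm
        _ ≤ |r * y| ^ 2 := by nlinarith [abs_nonneg (Real.sin (r*y)), abs_nonneg (r*y)]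
        _ = (r * y) ^ 2 := sq_abs _
    have hdiv : Real.sin (r * y) ^ 2 / r ^ 2 ≤ y ^ 2 := by
      rw [div_le_iff₀ (by positivity)]
      nlinarith
    have hs2 : Real.sqrt 2 ^ 2 = 2 := Real.sq_sqrt (by norm_num)
    have hs2' : (1:ℝ) ≤ Real.sqrt 2 := by nlinarith [Real.sqrt_nonneg 2]
    have hexp : (1 + Real.sqrt 2 * y) ^ 2 = 1 + 2 * (Real.sqrt 2 * y) + 2 * y ^ 2 := by
      linear_combination y ^ 2 * hs2
    unfold Atil
    have hA : 2 * Real.sin (r * y) ^ 2 / r ^ 2 = 2 * (Real.sin (r * y) ^ 2 / r ^ 2) := by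
      ring
    rw [hexp, hA]; linarith
  -- integral bounds
  have hlowint : IntervalIntegrable (fun y => (1 + y) / 2) MeasureTheory.volume 0 v := by
    apply Continuous.intervalIntegrable; fun_prop
  have hupint : IntervalIntegrable (fun y => 1 + Real.sqrt 2 * y) MeasureTheory.volume 0 v := by
    apply Continuous.intervalIntegrable; fun_prop
  have hIl : (∫ y in (0:ℝ)..v, (1 + y) / 2) = v / 2 + v ^ 2 / 4 := by
    have hd : ∀ x ∈ Set.uIcc (0:ℝ) v, HasDerivAt (fun y => y / 2 + y ^ 2 / 4) ((1 + x) / 2) x := by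
      intro x _
      have := ((hasDerivAt_id x).div_const 2).add ((hasDerivAt_pow 2 x).div_const 4)
      refine this.congr_deriv ?_
      · norm_num; try ring
    rw [intervalIntegral.integral_eq_sub_of_hasDerivAt hd hlowint]
    norm_num
  have hIu : (∫ y in (0:ℝ)..v, 1 + Real.sqrt 2 * y) = v + Real.sqrt 2 * (v ^ 2 / 2) := by
    have hd : ∀ x ∈ Set.uIcc (0:ℝ) v,
        HasDerivAt (fun y => y + Real.sqrt 2 * (y ^ 2 / 2)) (1 + Real.sqrt 2 * x) x := by
      intro x _
      have := (hasDerivAt_id x).add (((hasDerivAt_pow 2 x).div_const 2).const_mul (Real.sqrt 2))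
      refine this.congr_deriv ?_
      · norm_num; try ring
    rw [intervalIntegral.integral_eq_sub_of_hasDerivAt hd hupint]
    norm_num
  constructor
  · calc (1/4 : ℝ) * (v + v ^ 2) ≤ v / 2 + v ^ 2 / 4 := by nlinarith
      _ = ∫ y in (0:ℝ)..v, (1 + y) / 2 := hIl.symm
      _ ≤ ∫ y in (0:ℝ)..v, (Atil r y) ^ ((1:ℝ)/2) :=
          intervalIntegral.integral_mono_on hv hlowint hint hlow
  · calc (∫ y in (0:ℝ)..v, (Atil r y) ^ ((1:ℝ)/2))
        ≤ ∫ y in (0:ℝ)..v, 1 + Real.sqrt 2 * y :=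
          intervalIntegral.integral_mono_on hv hint hupint hup
      _ = v + Real.sqrt 2 * (v ^ 2 / 2) := hIu
      _ ≤ 1 * (v + v ^ 2) := by
          have hs : Real.sqrt 2 ≤ 2 := by
            nlinarith [Real.sq_sqrt (show (0:ℝ) ≤ 2 by norm_num), Real.sqrt_nonneg 2]
          nlinarith [Real.sqrt_nonneg 2]
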